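/- Let 𝒜 be an irreducible finite family of d×d matrices, and let U be a set of nonzero vectors closed under the action of 𝒜 (i.e., AU ⊆ cone(U) for all A ∈ 𝒜). If no d+1 points of U are the vertices of a simplex containing the origin in its convex hull, then the set Q = ∩_{a∈U} {x : (x,a) ≤ 0} is a closed convex cone invariant under every A^T for A ∈ 𝒜, and by irreducibility the dual Q^* is a proper invariant cone for 𝒜; hence 𝒜 possesses a proper invariant cone. -/

import Mathlib

open Matrix Set

def IsProperCone {d : ℕ} (K : Set (Fin d → ℝ)) : Prop :=
  IsClosed K ∧ Convex ℝ K ∧ (∀ x ∈ K, ∀ t : ℝ, 0 ≤ t → t • x ∈ K) ∧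
    K ∩ (-K) = {0} ∧ (interior K).Nonempty

def IsInvariantCone {d m : ℕ} (𝒜 : Fin m → Matrix (Fin d) (Fin d) ℝ)
    (K : Set (Fin d → ℝ)) : Prop :=
  IsProperCone K ∧ ∀ i, ∀ x ∈ K, (𝒜 i).mulVec x ∈ K

def IsIrreducibleFamily {d m : ℕ} (𝒜 : Fin m → Matrix (Fin d) (Fin d) ℝ) : Prop :=
  ∀ V : Submodule ℝ (Fin d → ℝ), (∀ i, ∀ x ∈ V, (𝒜 i).mulVec x ∈ V) → V = ⊥ ∨ V = ⊤

/-- The conic (convex) hull of a set of vectors. -/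
def coneHull {d : ℕ} (U : Set (Fin d → ℝ)) : Set (Fin d → ℝ) :=
  convexHull ℝ {x | ∃ u ∈ U, ∃ t : ℝ, 0 ≤ t ∧ x = t • u}

def dualConeSet {d : ℕ} (K : Set (Fin d → ℝ)) : Set (Fin d → ℝ) :=
  {x | ∀ y ∈ K, 0 ≤ x ⬝ᵥ y}

/-- The polar set `Q = ∩_{a ∈ U} {x : (x,a) ≤ 0}`. -/
def polarSet {d : ℕ} (U : Set (Fin d → ℝ)) : Set (Fin d → ℝ) :=
  {x | ∀ a ∈ U, x ⬝ᵥ a ≤ 0}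

namespace HellyAux

variable {d : ℕ}

lemma continuous_dot (a : Fin d → ℝ) : Continuous fun x : Fin d → ℝ => x ⬝ᵥ a := by
  simp only [dotProduct]
  exact continuous_finset_sum _ fun i _ => (continuous_apply i).mul continuous_const

lemma exists_dual_vec (f : (Fin d → ℝ) →L[ℝ] ℝ) :
    ∃ v : Fin d → ℝ, ∀ x, v ⬝ᵥ x = f x := by
  refine ⟨fun i => f fun j => if i = j then 1 else 0, fun x => ?_⟩
  have h := LinearMap.pi_apply_eq_sum_univ (f : (Fin d → ℝ) →ₗ[ℝ] ℝ) x
  simp only [ContinuousLinearMap.coe_coe] at h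
  rw [h, dotProduct]
  exact Finset.sum_congr rfl fun i _ => by rw [smul_eq_mul, mul_comm]

lemma exists_perp (W : Submodule ℝ (Fin d → ℝ)) (hW : W ≠ ⊤) :
    ∃ v : Fin d → ℝ, v ≠ 0 ∧ ∀ w ∈ W, v ⬝ᵥ w = 0 := by
  obtain ⟨x, hx⟩ : ∃ x, x ∉ W := by
    by_contra h; push_neg at h; exact hW (eq_top_iff.2 fun y _ => h y)
  have hcl : IsClosed (W : Set (Fin d → ℝ)) := W.closed_of_finiteDimensional
  obtain ⟨f, u, hfa, hfx⟩ := geometric_hahn_banach_closed_point W.convex hcl hx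
  have hu : 0 < u := by simpa using hfa 0 W.zero_mem
  have hf0 : ∀ w ∈ W, f w = 0 := by
    intro w hw
    by_contra h
    have h1 : f (((u + 1) / f w) • w) < u := hfa _ (W.smul_mem _ hw)
    rw [f.map_smul, smul_eq_mul, div_mul_cancel₀ _ h] at h1
    linarith
  obtain ⟨v, hv⟩ := exists_dual_vec f
  refine ⟨v, ?_, fun w hw => by rw [hv]; exact hf0 w hw⟩
  intro h
  rw [h] at hv
  have h2 := hv x
  rw [zero_dotProduct] at h2
  linarith

lemma bipolar (Q : Set (Fin d → ℝ)) (hconv : Convex ℝ Q) (hcl : IsClosed Q)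
    (h0 : (0 : Fin d → ℝ) ∈ Q) (hcone : ∀ x ∈ Q, ∀ t : ℝ, 0 ≤ t → t • x ∈ Q) :
    dualConeSet (dualConeSet Q) ⊆ Q := by
  intro x hx
  by_contra hxQ
  obtain ⟨f, u, hfa, hfx⟩ := geometric_hahn_banach_closed_point hconv hcl hxQ
  have hu : 0 < u := by simpa using hfa 0 h0
  have hfneg : ∀ y ∈ Q, f y ≤ 0 := by
    intro y hy
    by_contra h
    push_neg at h
    have h1 : f (((u + 1) / f y) • y) < u :=
      hfa _ (hcone y hy _ (le_of_lt (div_pos (by linarith) h)))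
    rw [f.map_smul, smul_eq_mul, div_mul_cancel₀ _ (ne_of_gt h)] at h1
    linarith
  obtain ⟨v, hv⟩ := exists_dual_vec (-f)
  have hvK : v ∈ dualConeSet Q := by
    intro y hy
    rw [hv y, ContinuousLinearMap.neg_apply]
    linarith [hfneg y hy]
  have h2 := hx v hvK
  rw [dotProduct_comm, hv x, ContinuousLinearMap.neg_apply] at h2
  linarith

lemma affine_submodule (A : AffineSubspace ℝ (Fin d → ℝ)) (h0 : (0 : Fin d → ℝ) ∈ A)
    (hA : A ≠ ⊤) : ∃ W : Submodule ℝ (Fin d → ℝ), W ≠ ⊤ ∧ ∀ x ∈ A, x ∈ W := by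
  refine ⟨{ carrier := (A : Set (Fin d → ℝ))
            add_mem' := fun {a b} ha hb => ?_
            zero_mem' := h0
            smul_mem' := fun c a ha => ?_ }, ?_, fun x hx => hx⟩
  · have h := A.smul_vsub_vadd_mem 1 ha h0 hb
    simpa using h
  · have h := A.smul_vsub_vadd_mem c ha h0 h0
    simpa using h
  · intro h
    apply hA
    apply eq_top_iff.2
    intro y _
    have hy : y ∈ (⊤ : Submodule ℝ (Fin d → ℝ)) := Submodule.mem_top
    rw [← h] at hy
    exact hy

lemma convex_dual_halfspace (x : Fin d → ℝ) : Convex ℝ {y : Fin d → ℝ | x ⬝ᵥ y ≤ 0} := by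
  have h : IsLinearMap ℝ fun y : Fin d → ℝ => x ⬝ᵥ y :=
    ⟨fun a b => dotProduct_add x a b, fun c a => dotProduct_smul c x a⟩
  exact convex_halfSpace_le h 0

lemma dot_mulVec_left (A : Matrix (Fin d) (Fin d) ℝ) (x y : Fin d → ℝ) :
    A *ᵥ x ⬝ᵥ y = x ⬝ᵥ (Aᵀ *ᵥ y) := by
  rw [dotProduct_comm, dotProduct_mulVec, mulVec_transpose, dotProduct_comm]


lemma zero_not_mem_hull {U : Set (Fin d → ℝ)}
    (hnosimplex : ¬ ∃ f : Fin (d + 1) → (Fin d → ℝ),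
      (∀ k, f k ∈ U) ∧ (0 : Fin d → ℝ) ∈ convexHull ℝ (Set.range f)) :
    (0 : Fin d → ℝ) ∉ convexHull ℝ U := by
  classical
  intro h0
  rw [convexHull_eq_union] at h0
  simp only [mem_iUnion] at h0
  obtain ⟨t, hts, hai, h0t⟩ := h0
  have htne : t.Nonempty := by
    rcases t.eq_empty_or_nonempty with rfl | h
    · simp at h0t
    · exact h
  obtain ⟨u₀, hu₀⟩ := htne
  have hcard : t.card ≤ d + 1 := by
    have h1 := hai.card_le_finrank_succ
    have h2 : Module.finrank ℝ ↥(vectorSpan ℝ (Set.range ((↑) : t → (Fin d → ℝ)))) ≤ d := by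
      have h3 := Submodule.finrank_le (vectorSpan ℝ (Set.range ((↑) : t → (Fin d → ℝ))))
      simpa [Module.finrank_fin_fun] using h3
    rw [Fintype.card_coe] at h1
    omega
  refine hnosimplex ⟨fun k => if hk : (k : ℕ) < t.card then ((t.equivFin.symm ⟨k, hk⟩ : t) : Fin d → ℝ) else u₀,
    fun k => ?_, ?_⟩
  · dsimp only
    split
    · exact hts (t.equivFin.symm _).2
    · exact hts hu₀
  · refine convexHull_mono ?_ h0t
    intro x hx
    have hx' : x ∈ t := hx
    set j := t.equivFin ⟨x, hx'⟩ with hj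
    refine ⟨⟨(j : ℕ), lt_of_lt_of_le j.2 hcard⟩, ?_⟩
    dsimp only
    rw [dif_pos j.2]
    have : (⟨(j : ℕ), j.2⟩ : Fin t.card) = j := rfl
    rw [this, hj, Equiv.symm_apply_apply]

lemma exists_nonzero_polar {U : Set (Fin d → ℝ)} (hUne : U.Nonempty)
    (h0C : (0 : Fin d → ℝ) ∉ convexHull ℝ U) :
    ∃ x : Fin d → ℝ, x ≠ 0 ∧ x ∈ polarSet U := by
  set C := convexHull ℝ U with hC
  have hCconv : Convex ℝ C := convex_convexHull ℝ U
  by_cases hcl : (0 : Fin d → ℝ) ∈ closure C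
  · by_cases hint : (interior C).Nonempty
    · obtain ⟨z, hz⟩ := hint
      have h0i : (0 : Fin d → ℝ) ∉ interior C := fun h => h0C (interior_subset h)
      obtain ⟨f, hf⟩ := geometric_hahn_banach_open_point hCconv.interior isOpen_interior h0i
      simp only [map_zero] at hf
      have hfz : f z < 0 := hf z hz
      have hfC : ∀ y ∈ C, f y ≤ 0 := by
        intro y hy
        by_contra h
        push_neg at h
        have hfyz : 0 < f y - f z := by linarith
        set b : ℝ := f y / (f y - f z) / 2 with hb
        have hb0 : 0 < b := by
          have := div_pos h hfyz
          rw [hb]; linarith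
        have hb1 : b < 1 := by
          have h4 : f y / (f y - f z) ≤ 1 := by
            rw [div_le_one hfyz]; linarith
          rw [hb]; linarith
        have hmem : (1 - b) • y + b • z ∈ interior C :=
          hCconv.combo_closure_interior_mem_interior (subset_closure hy) hz
            (by linarith) hb0 (by ring)
        have h5 := hf _ hmem
        rw [map_add, f.map_smul, f.map_smul, smul_eq_mul, smul_eq_mul] at h5
        have hbe : b * (f y - f z) = f y / 2 := by
          rw [hb]
          field_simp
        nlinarith
      obtain ⟨v, hv⟩ := exists_dual_vec f
      refine ⟨v, ?_, fun a ha => ?_⟩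
      · intro h
        rw [h] at hv
        have h6 := hv z
        rw [zero_dotProduct] at h6
        linarith
      · rw [hv a]
        exact hfC a (subset_convexHull ℝ U ha)
    · have haff : affineSpan ℝ C ≠ ⊤ := by
        intro h
        exact hint ((hCconv.interior_nonempty_iff_affineSpan_eq_top).2 h)
      have h0A : (0 : Fin d → ℝ) ∈ affineSpan ℝ C := by
        have h1 : closure C ⊆ (affineSpan ℝ C : Set (Fin d → ℝ)) :=
          closure_minimal (subset_affineSpan ℝ C)
            (affineSpan ℝ C).closed_of_finiteDimensional
        exact h1 hcl
      obtain ⟨W, hWt, hW⟩ := affine_submodule _ h0A haff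
      obtain ⟨v, hv0, hv⟩ := exists_perp W hWt
      exact ⟨v, hv0, fun a ha =>
        le_of_eq (hv a (hW a (subset_affineSpan ℝ C (subset_convexHull ℝ U ha))))⟩
  · obtain ⟨f, u, hfa, hfx⟩ := geometric_hahn_banach_closed_point hCconv.closure isClosed_closure hcl
    rw [map_zero] at hfx
    obtain ⟨v, hv⟩ := exists_dual_vec f
    obtain ⟨u₀, hu₀⟩ := hUne
    have hfu0 : f u₀ < u := hfa u₀ (subset_closure (subset_convexHull ℝ U hu₀))
    refine ⟨v, ?_, fun a ha => ?_⟩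
    · intro h
      rw [h] at hv
      have h6 := hv u₀
      rw [zero_dotProduct] at h6
      linarith
    · rw [hv a]
      exact le_of_lt (lt_trans (hfa a (subset_closure (subset_convexHull ℝ U ha))) hfx)

end HellyAux

open HellyAux in
/-- If no `d+1` points of `U` span a simplex whose convex hull contains the
origin, then `Q = polarSet U` is a closed convex cone invariant under the
transposed family, its dual is a proper invariant cone for `𝒜`, and hence `𝒜`
possesses a proper invariant cone. -/
theorem helly_invariant_cone {d m : ℕ} (hm : 0 < m)
    (𝒜 : Fin m → Matrix (Fin d) (Fin d) ℝ)
    (hirr : IsIrreducibleFamily 𝒜)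
    (U : Set (Fin d → ℝ)) (hUne : U.Nonempty) (hU0 : (0 : Fin d → ℝ) ∉ U)
    (hUclosed : ∀ i, ∀ u ∈ U, (𝒜 i).mulVec u ∈ coneHull U)
    (hnosimplex : ¬ ∃ f : Fin (d + 1) → (Fin d → ℝ),
      (∀ k, f k ∈ U) ∧ (0 : Fin d → ℝ) ∈ convexHull ℝ (Set.range f)) :
    (IsClosed (polarSet U) ∧ Convex ℝ (polarSet U) ∧
      (∀ x ∈ polarSet U, ∀ t : ℝ, 0 ≤ t → t • x ∈ polarSet U) ∧
      (∀ i, ∀ x ∈ polarSet U, (𝒜 i)ᵀ.mulVec x ∈ polarSet U)) ∧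
    IsInvariantCone 𝒜 (dualConeSet (polarSet U)) ∧
    ∃ K : Set (Fin d → ℝ), IsInvariantCone 𝒜 K := by
  classical
  set Q := polarSet U with hQdef
  -- membership in Q restated
  have hQmem : ∀ x : Fin d → ℝ, x ∈ Q ↔ ∀ a ∈ U, x ⬝ᵥ a ≤ 0 := fun x => Iff.rfl
  -- a functional in Q is nonpositive on the cone hull
  have hQcone_dual : ∀ x ∈ Q, ∀ y ∈ coneHull U, x ⬝ᵥ y ≤ 0 := by
    intro x hx y hy
    have hsub : coneHull U ⊆ {y : Fin d → ℝ | x ⬝ᵥ y ≤ 0} := by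
      refine convexHull_min ?_ (convex_dual_halfspace x)
      rintro z ⟨u, hu, t, ht, rfl⟩
      show x ⬝ᵥ t • u ≤ 0
      rw [dotProduct_smul, smul_eq_mul]
      exact mul_nonpos_iff.2 (Or.inl ⟨ht, hx u hu⟩)
    exact hsub hy
  have hQclosed : IsClosed Q := by
    have hQe : Q = ⋂ a ∈ U, {x : Fin d → ℝ | x ⬝ᵥ a ≤ 0} := by
      ext x; simp [hQdef, polarSet]
    rw [hQe]
    exact isClosed_biInter fun a _ => isClosed_le (continuous_dot a) continuous_const
  have hQconvex : Convex ℝ Q := by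
    intro x hx y hy a b ha hb hab c hc
    show (a • x + b • y) ⬝ᵥ c ≤ 0
    rw [add_dotProduct, smul_dotProduct, smul_dotProduct, smul_eq_mul, smul_eq_mul]
    have h1 : a * (x ⬝ᵥ c) ≤ 0 := mul_nonpos_iff.2 (Or.inl ⟨ha, hx c hc⟩)
    have h2 : b * (y ⬝ᵥ c) ≤ 0 := mul_nonpos_iff.2 (Or.inl ⟨hb, hy c hc⟩)
    linarith
  have hQcone : ∀ x ∈ Q, ∀ t : ℝ, 0 ≤ t → t • x ∈ Q := by
    intro x hx t ht a ha
    show t • x ⬝ᵥ a ≤ 0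
    rw [smul_dotProduct, smul_eq_mul]
    exact mul_nonpos_iff.2 (Or.inl ⟨ht, hx a ha⟩)
  have hQ0 : (0 : Fin d → ℝ) ∈ Q := fun a _ => by rw [zero_dotProduct]
  have hAT : ∀ i, ∀ x ∈ Q, (𝒜 i)ᵀ.mulVec x ∈ Q := by
    intro i x hx a ha
    show (𝒜 i)ᵀ *ᵥ x ⬝ᵥ a ≤ 0
    have h1 : (𝒜 i)ᵀ *ᵥ x ⬝ᵥ a = x ⬝ᵥ ((𝒜 i) *ᵥ a) := by
      rw [dot_mulVec_left, transpose_transpose]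
    rw [h1]
    exact hQcone_dual x hx _ (hUclosed i a ha)
  -- Step A and B
  have h0C := zero_not_mem_hull hnosimplex
  obtain ⟨x₀, hx₀0, hx₀Q⟩ := exists_nonzero_polar hUne h0C
  -- the dual cone K
  set K := dualConeSet Q with hKdef
  have hKclosed : IsClosed K := by
    have hKe : K = ⋂ y ∈ Q, {x : Fin d → ℝ | 0 ≤ x ⬝ᵥ y} := by
      ext x; simp [hKdef, dualConeSet]
    rw [hKe]
    exact isClosed_biInter fun y _ => isClosed_le continuous_const (continuous_dot y)
  have hKconvex : Convex ℝ K := by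
    intro x hx y hy a b ha hb hab c hc
    show 0 ≤ (a • x + b • y) ⬝ᵥ c
    rw [add_dotProduct, smul_dotProduct, smul_dotProduct, smul_eq_mul, smul_eq_mul]
    exact add_nonneg (mul_nonneg ha (hx c hc)) (mul_nonneg hb (hy c hc))
  have hKcone : ∀ x ∈ K, ∀ t : ℝ, 0 ≤ t → t • x ∈ K := by
    intro x hx t ht y hy
    show 0 ≤ t • x ⬝ᵥ y
    rw [smul_dotProduct, smul_eq_mul]
    exact mul_nonneg ht (hx y hy)
  have hK0 : (0 : Fin d → ℝ) ∈ K := fun y _ => by rw [zero_dotProduct]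
  have hKinv : ∀ i, ∀ x ∈ K, (𝒜 i).mulVec x ∈ K := by
    intro i x hx y hy
    show 0 ≤ (𝒜 i) *ᵥ x ⬝ᵥ y
    rw [dot_mulVec_left]
    have h1 : (𝒜 i)ᵀ *ᵥ y ∈ Q := hAT i y hy
    exact hx _ h1
  -- pointedness via irreducibility
  have hVK : ∀ x : Fin d → ℝ, (∀ y ∈ Q, x ⬝ᵥ y = 0) → x = 0 := by
    intro x hx
    set V : Submodule ℝ (Fin d → ℝ) :=
      { carrier := {z | ∀ y ∈ Q, z ⬝ᵥ y = 0}
        add_mem' := fun {a b} ha hb y hy => by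
          rw [add_dotProduct, ha y hy, hb y hy, add_zero]
        zero_mem' := fun y _ => zero_dotProduct y
        smul_mem' := fun c a ha y hy => by
          rw [smul_dotProduct, ha y hy, smul_zero] } with hVdef
    have hinv : ∀ i, ∀ z ∈ V, (𝒜 i).mulVec z ∈ V := by
      intro i z hz y hy
      rw [dot_mulVec_left]
      exact hz _ (hAT i y hy)
    rcases hirr V hinv with hbot | htop
    · have hxV : x ∈ V := hx
      rw [hbot] at hxV
      simpa using hxV
    · exfalso
      have hx₀V : x₀ ∈ V := htop ▸ Submodule.mem_top
      exact hx₀0 (dotProduct_self_eq_zero.1 (hx₀V x₀ hx₀Q))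
  have hKpointed : K ∩ (-K) = {0} := by
    ext x
    constructor
    · rintro ⟨hx1, hx2⟩
      have hx2' : -x ∈ K := Set.mem_neg.1 hx2
      have hx0 : x = 0 := by
        refine hVK x fun y hy => le_antisymm ?_ (hx1 y hy)
        have h3 := hx2' y hy
        rw [neg_dotProduct] at h3
        linarith
      simp [hx0]
    · intro hx
      rw [Set.mem_singleton_iff] at hx
      subst hx
      exact ⟨hK0, Set.mem_neg.2 (by rw [neg_zero]; exact hK0)⟩
  -- U-perpendicular is trivial
  have hWQ : ∀ x : Fin d → ℝ, (∀ a ∈ U, x ⬝ᵥ a = 0) → x = 0 := by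
    set W : Submodule ℝ (Fin d → ℝ) :=
      { carrier := {z | ∀ a ∈ U, z ⬝ᵥ a = 0}
        add_mem' := fun {a b} ha hb y hy => by
          rw [add_dotProduct, ha y hy, hb y hy, add_zero]
        zero_mem' := fun y _ => zero_dotProduct y
        smul_mem' := fun c a ha y hy => by
          rw [smul_dotProduct, ha y hy, smul_zero] } with hWdef
    have hWmem : ∀ z : Fin d → ℝ, z ∈ W ↔ ∀ a ∈ U, z ⬝ᵥ a = 0 := fun z => Iff.rfl
    have hWT : ∀ i, ∀ w ∈ W, (𝒜 i)ᵀ *ᵥ w ∈ W := by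
      intro i w hw a ha
      have h1 : w ∈ Q := fun a' ha' => le_of_eq (hw a' ha')
      have h2 : -w ∈ Q := fun a' ha' => by
        rw [neg_dotProduct, hw a' ha', neg_zero]
      have h3 := hAT i w h1 a ha
      have h4 := hAT i (-w) h2 a ha
      rw [Matrix.mulVec_neg, neg_dotProduct] at h4
      linarith
    set W' : Submodule ℝ (Fin d → ℝ) :=
      { carrier := {z | ∀ w ∈ W, z ⬝ᵥ w = 0}
        add_mem' := fun {a b} ha hb y hy => by
          rw [add_dotProduct, ha y hy, hb y hy, add_zero]
        zero_mem' := fun y _ => zero_dotProduct y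
        smul_mem' := fun c a ha y hy => by
          rw [smul_dotProduct, ha y hy, smul_zero] } with hW'def
    have hinv : ∀ i, ∀ z ∈ W', (𝒜 i).mulVec z ∈ W' := by
      intro i z hz w hw
      rw [dot_mulVec_left]
      exact hz _ (hWT i w hw)
    rcases hirr W' hinv with hbot | htop
    · exfalso
      by_cases hWtop : W = ⊤
      · obtain ⟨a₀, ha₀⟩ := hUne
        have h5 : a₀ ∈ W := hWtop ▸ Submodule.mem_top
        have h6 : a₀ = 0 := dotProduct_self_eq_zero.1 (h5 a₀ ha₀)
        rw [h6] at ha₀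
        exact hU0 ha₀
      · obtain ⟨v, hv0, hv⟩ := exists_perp W hWtop
        have h7 : v ∈ W' := fun w hw => hv w hw
        rw [hbot] at h7
        exact hv0 (by simpa using h7)
    · intro x hx
      have hxW : x ∈ W := hx
      have h8 : x ∈ W' := htop ▸ Submodule.mem_top
      exact dotProduct_self_eq_zero.1 (h8 x hxW)
  -- nonempty interior
  have hKint : (interior K).Nonempty := by
    by_contra hint
    have haff : affineSpan ℝ K ≠ ⊤ := by
      intro h
      exact hint ((hKconvex.interior_nonempty_iff_affineSpan_eq_top).2 h)
    obtain ⟨W, hWt, hW⟩ := affine_submodule _ (subset_affineSpan ℝ K hK0) haff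
    obtain ⟨v, hv0, hv⟩ := exists_perp W hWt
    have hvperpK : ∀ y ∈ K, v ⬝ᵥ y = 0 := fun y hy =>
      hv y (hW y (subset_affineSpan ℝ K hy))
    have hvQ : v ∈ Q :=
      bipolar Q hQconvex hQclosed hQ0 hQcone fun y hy => le_of_eq (hvperpK y hy).symm
    have hvnQ : -v ∈ Q :=
      bipolar Q hQconvex hQclosed hQ0 hQcone fun y hy => by
        rw [neg_dotProduct, hvperpK y hy, neg_zero]
    refine hv0 (hWQ v fun a ha => le_antisymm (hvQ a ha) ?_)
    have h9 := hvnQ a ha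
    rw [neg_dotProduct] at h9
    linarith
  exact ⟨⟨hQclosed, hQconvex, hQcone, hAT⟩,
    ⟨⟨hKclosed, hKconvex, hKcone, hKpointed, hKint⟩, hKinv⟩,
    K, ⟨hKclosed, hKconvex, hKcone, hKpointed, hKint⟩, hKinv⟩
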